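/- Let d ≥ 1 and M, J ∈ ℕ with J > (d−1)·M. Let w_1,…,w_J ∈ ℝ^d be vectors such that for every subset T ⊆ {1,…,J} of cardinality d the family (w_j)_{j∈T} is linearly independent. Let z, z_1,…,z_M ∈ ℝ^d. If for every j ∈ {1,…,J} there exists m ∈ {1,…,M} with ⟨w_j, z⟩ = ⟨w_j, z_m⟩, then z ∈ {z_1,…,z_M}. -/

import Mathlib

/-- If `J > (d−1)·M`, the vectors `w_1, …, w_J ∈ ℝ^d` are such that every `d` of them are
linearly independent, and for every `j` there exists `m` with `⟨w_j, z⟩ = ⟨w_j, z_m⟩`,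
then `z ∈ {z_1, …, z_M}`. -/
theorem identification_definite (d M J : ℕ) (hd : 1 ≤ d) (hJ : (d - 1) * M < J)
    (w : Fin J → EuclideanSpace ℝ (Fin d))
    (hw : ∀ T : Finset (Fin J), T.card = d →
      LinearIndependent ℝ (fun j : T => w j.1))
    (z : EuclideanSpace ℝ (Fin d)) (zs : Fin M → EuclideanSpace ℝ (Fin d))
    (h : ∀ j, ∃ m, (inner ℝ (w j) z : ℝ) = (inner ℝ (w j) (zs m) : ℝ)) :
    ∃ m, z = zs m := by
  have hJ0 : 0 < J := lt_of_le_of_lt (Nat.zero_le _) hJ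
  choose f hf using h
  -- pigeonhole: some fiber of f has more than d-1 elements
  have hmaps : ∀ a ∈ (Finset.univ : Finset (Fin J)), f a ∈ (Finset.univ : Finset (Fin M)) := by
    intro a _; exact Finset.mem_univ _
  have hcard : (Finset.univ : Finset (Fin M)).card * (d - 1) <
      (Finset.univ : Finset (Fin J)).card := by
    simpa [Finset.card_univ, Nat.mul_comm] using hJ
  obtain ⟨m, _, hm⟩ := Finset.exists_lt_card_fiber_of_mul_lt_card_of_maps_to hmaps hcard
  -- fiber has card ≥ d
  have hdm : d ≤ (Finset.univ.filter fun a => f a = m).card := by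
    omega
  obtain ⟨T, hTsub, hTcard⟩ := Finset.exists_subset_card_eq hdm
  have hind := hw T hTcard
  have hne : T.Nonempty := Finset.card_pos.mp (by omega)
  have : Nonempty T := ⟨⟨hne.choose, hne.choose_spec⟩⟩
  have hcardT : Fintype.card T = Module.finrank ℝ (EuclideanSpace ℝ (Fin d)) := by
    rw [finrank_euclideanSpace, Fintype.card_fin, Fintype.card_coe, hTcard]
  let b := basisOfLinearIndependentOfCardEqFinrank hind hcardT
  have hb : ⇑b = fun j : T => w j.1 := coe_basisOfLinearIndependentOfCardEqFinrank hind hcardT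
  have hzero : z - zs m = 0 := by
    have key : ∀ i : T, (inner ℝ (b i) (z - zs m) : ℝ) = 0 := by
      intro i
      have hfi : f i.1 = m := by
        have := hTsub i.2
        simpa using this
      have := hf i.1
      rw [hfi] at this
      rw [hb]
      simp [inner_sub_right, this]
    have hvv : (inner ℝ (z - zs m) (z - zs m) : ℝ) = 0 := by
      nth_rewrite 1 [← b.sum_repr (z - zs m)]
      rw [sum_inner]
      refine Finset.sum_eq_zero fun i _ => ?_
      rw [real_inner_smul_left, key i, mul_zero]
    exact inner_self_eq_zero.mp hvv
  exact ⟨m, by rwa [sub_eq_zero] at hzero⟩
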